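/- Let vecc(X) ~ N_{np}(vecc(μ), Σ_V ⊗ L⁺) with Σ_V positive definite and L a graph Laplacian with pseudo-inverse L⁺. Then the density of vecc(X) restricted to the support of the distribution is proportional to exp(−(1/4) Σ_{i,j=1}^n (x^μ_i − x^μ_j)'Σ_V^{-1}(x^μ_i − x^μ_j) w_{ij}), i.e. the exponent of the (degenerate) Gaussian density equals −(1/2)·md²(X) with md²(X) = (1/2)Σ_{i,j}(x^μ_i − x^μ_j)'Σ_V^{-1}(x^μ_i − x^μ_j)w_{ij}. -/

import Mathlib

open Matrix
open scoped Kronecker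

/-- `B` is the Moore–Penrose pseudo-inverse of `A`. -/
def IsMoorePenrose {n m : Type*} [Fintype n] [Fintype m]
    (A : Matrix n m ℝ) (B : Matrix m n ℝ) : Prop :=
  A * B * A = A ∧ B * A * B = B ∧ (A * B)ᵀ = A * B ∧ (B * A)ᵀ = B * A

lemma mp_symm {n m : Type*} [Fintype n] [Fintype m]
    {A : Matrix n m ℝ} {B : Matrix m n ℝ} (h : IsMoorePenrose A B) :
    IsMoorePenrose B A :=
  ⟨h.2.1, h.1, h.2.2.2, h.2.2.1⟩

lemma mp_unique {n m : Type*} [Fintype n] [Fintype m]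
    {A : Matrix n m ℝ} {B C : Matrix m n ℝ}
    (hB : IsMoorePenrose A B) (hC : IsMoorePenrose A C) : B = C := by
  obtain ⟨hB1, hB2, hB3, hB4⟩ := hB
  obtain ⟨hC1, hC2, hC3, hC4⟩ := hC
  have e1 : (A*C)*(A*B) = A*B := by rw [← Matrix.mul_assoc, hC1]
  have e2 : (A*B)*(A*C) = A*C := by rw [← Matrix.mul_assoc, hB1]
  have hAB : A*B = A*C := by
    calc A*B = (A*C)*(A*B) := e1.symm
    _ = (A*C)ᵀ*(A*B)ᵀ := by rw [hC3, hB3]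
    _ = ((A*B)*(A*C))ᵀ := (transpose_mul _ _).symm
    _ = (A*C)ᵀ := by rw [e2]
    _ = A*C := hC3
  have e1' : (B*A)*(C*A) = B*A := by rw [Matrix.mul_assoc, ← Matrix.mul_assoc A, hC1]
  have e2' : (C*A)*(B*A) = C*A := by rw [Matrix.mul_assoc, ← Matrix.mul_assoc A, hB1]
  have hBA : B*A = C*A := by
    calc B*A = (B*A)*(C*A) := e1'.symm
    _ = (B*A)ᵀ*(C*A)ᵀ := by rw [hB4, hC4]
    _ = ((C*A)*(B*A))ᵀ := (transpose_mul _ _).symm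
    _ = (C*A)ᵀ := by rw [e2']
    _ = C*A := hC4
  calc B = B*A*B := hB2.symm
  _ = C*A*B := by rw [hBA]
  _ = C*(A*B) := Matrix.mul_assoc _ _ _
  _ = C*(A*C) := by rw [hAB]
  _ = C*A*C := (Matrix.mul_assoc _ _ _).symm
  _ = C := hC2

lemma mp_kron {n m : Type*} [Fintype n] [Fintype m] [DecidableEq n] [DecidableEq m]
    {A B : Matrix n n ℝ} {C D : Matrix m m ℝ}
    (h1 : IsMoorePenrose A B) (h2 : IsMoorePenrose C D) :
    IsMoorePenrose (A ⊗ₖ C) (B ⊗ₖ D) := by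
  obtain ⟨a1, a2, a3, a4⟩ := h1
  obtain ⟨c1, c2, c3, c4⟩ := h2
  refine ⟨?_, ?_, ?_, ?_⟩
  · rw [← mul_kronecker_mul, ← mul_kronecker_mul, a1, c1]
  · rw [← mul_kronecker_mul, ← mul_kronecker_mul, a2, c2]
  · rw [← mul_kronecker_mul, ← kroneckerMap_transpose, a3, c3]
  · rw [← mul_kronecker_mul, ← kroneckerMap_transpose, a4, c4]

/-- for the (degenerate) Gaussian model `vecc X ~ N(vecc μ, SV ⊗ L⁺)`,
the exponent of the density, `−(1/2)·md²(X)` with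
`md²(X) = vecc(X−μ)ᵀ (SV ⊗ L⁺)⁺ vecc(X−μ)`, equals
`−(1/4) ∑_{i,j} (x^μ_i − x^μ_j)ᵀ SV⁻¹ (x^μ_i − x^μ_j) w_{ij}`, so the density on the
support is proportional to `exp(−(1/4) ∑_{i,j} (x^μ_i − x^μ_j)ᵀ SV⁻¹ (x^μ_i − x^μ_j) w_{ij})`
(column vectorization: `vecc(X)_{(k,i)} = X_{ik}`). -/
theorem density_exponent_edgewise_form {n p : ℕ} (W : Matrix (Fin n) (Fin n) ℝ)
    (hsym : Wᵀ = W) (hnonneg : ∀ i j, i ≠ j → 0 ≤ W i j) (hdiag : ∀ i, W i i = 0)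
    (Lplus : Matrix (Fin n) (Fin n) ℝ)
    (hLplus : IsMoorePenrose (Matrix.diagonal (fun i => ∑ j, W i j) - W) Lplus)
    (SV : Matrix (Fin p) (Fin p) ℝ) (hSV : SV.PosDef)
    (Pinv : Matrix (Fin p × Fin n) (Fin p × Fin n) ℝ)
    (hPinv : IsMoorePenrose (SV ⊗ₖ Lplus) Pinv)
    (X μ : Matrix (Fin n) (Fin p) ℝ) :
    -(1 / 2) * ((fun ki : Fin p × Fin n => (X - μ) ki.2 ki.1) ⬝ᵥ
        (Pinv *ᵥ fun ki : Fin p × Fin n => (X - μ) ki.2 ki.1)) =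
      -(1 / 4) * ∑ i, ∑ j,
        ((fun k => (X - μ) i k - (X - μ) j k) ⬝ᵥ
          (SV⁻¹ *ᵥ fun k => (X - μ) i k - (X - μ) j k)) * W i j := by
  set L : Matrix (Fin n) (Fin n) ℝ := Matrix.diagonal (fun i => ∑ j, W i j) - W with hL
  -- SV⁻¹ is the MP inverse of SV
  have hdet : IsUnit SV.det := (Matrix.isUnit_iff_isUnit_det _).mp hSV.isUnit
  have hSVinv : SV * SV⁻¹ = 1 := Matrix.mul_nonsing_inv _ hdet
  have hinvSV : SV⁻¹ * SV = 1 := Matrix.nonsing_inv_mul _ hdet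
  have hmpSV : IsMoorePenrose SV SV⁻¹ := by
    refine ⟨?_, ?_, ?_, ?_⟩ <;>
      simp [hSVinv, hinvSV]
  -- identify Pinv
  have hPinv' : Pinv = SV⁻¹ ⊗ₖ L :=
    mp_unique hPinv (mp_kron hmpSV (mp_symm hLplus))
  set Y : Matrix (Fin n) (Fin p) ℝ := X - μ with hY
  set Q : Fin n → Fin n → ℝ := fun i j => Y i ⬝ᵥ (SV⁻¹ *ᵥ Y j) with hQ
  have hW : ∀ i j, W j i = W i j := fun i j => by simpa using congrFun (congrFun hsym i) j
  have key : ((fun ki : Fin p × Fin n => Y ki.2 ki.1) ⬝ᵥ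
      ((SV⁻¹ ⊗ₖ L) *ᵥ fun ki : Fin p × Fin n => Y ki.2 ki.1)) =
      ∑ i, ∑ j, L i j * Q i j := by
    simp only [hQ, dotProduct, mulVec, kroneckerMap_apply, Fintype.sum_prod_type,
      Finset.mul_sum]
    rw [Finset.sum_comm]
    refine Finset.sum_congr rfl fun i _ => ?_
    conv_lhs => rw [Finset.sum_congr rfl (fun k _ => Finset.sum_comm)]
    rw [Finset.sum_comm]
    exact Finset.sum_congr rfl fun j _ => Finset.sum_congr rfl fun k _ =>
      Finset.sum_congr rfl fun l _ => by ring
  have hterm : ∀ i j, ((fun k => Y i k - Y j k) ⬝ᵥ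
      (SV⁻¹ *ᵥ fun k => Y i k - Y j k))
      = Q i i - Q i j - Q j i + Q j j := by
    intro i j
    simp only [hQ, dotProduct, mulVec, Finset.mul_sum, ← Finset.sum_sub_distrib,
      ← Finset.sum_add_distrib]
    exact Finset.sum_congr rfl fun k _ => Finset.sum_congr rfl fun l _ => by ring
  have swap1 : ∑ i, ∑ j, Q j j * W i j = ∑ i, ∑ j, Q i i * W i j := by
    rw [Finset.sum_comm]
    exact Finset.sum_congr rfl fun i _ => Finset.sum_congr rfl fun j _ => by rw [hW]
  have swap2 : ∑ i, ∑ j, Q j i * W i j = ∑ i, ∑ j, Q i j * W i j := by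
    rw [Finset.sum_comm]
    exact Finset.sum_congr rfl fun i _ => Finset.sum_congr rfl fun j _ => by rw [hW]
  have hLsum : ∑ i, ∑ j, L i j * Q i j
      = (∑ i, ∑ j, Q i i * W i j) - ∑ i, ∑ j, Q i j * W i j := by
    rw [← Finset.sum_sub_distrib]
    refine Finset.sum_congr rfl fun i _ => ?_
    calc ∑ j, L i j * Q i j
        = ∑ j, ((if i = j then ∑ l, W i l else 0) * Q i j - W i j * Q i j) := by
          simp only [hL, Matrix.sub_apply, Matrix.diagonal_apply, sub_mul]
      _ = (∑ j, (if i = j then ∑ l, W i l else 0) * Q i j) - ∑ j, W i j * Q i j :=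
          Finset.sum_sub_distrib _ _
      _ = (∑ l, W i l) * Q i i - ∑ j, W i j * Q i j := by
          congr 1
          simp
      _ = (∑ j, Q i i * W i j) - ∑ j, Q i j * W i j := by
          rw [Finset.sum_mul]
          congr 1 <;> exact Finset.sum_congr rfl fun j _ => mul_comm _ _
  have expand : ∑ i, ∑ j, (Q i i - Q i j - Q j i + Q j j) * W i j
      = (∑ i, ∑ j, Q i i * W i j) - (∑ i, ∑ j, Q i j * W i j)
        - (∑ i, ∑ j, Q j i * W i j) + ∑ i, ∑ j, Q j j * W i j := by
    simp only [sub_mul, add_mul, Finset.sum_sub_distrib, Finset.sum_add_distrib]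
  rw [hPinv', key, hLsum]
  simp only [hterm]
  rw [expand, swap1, swap2]
  ring
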